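/- Let h > 0 and δ ∈ [0,1]. Then for every u : ℤ × ℤ → ℝ and every (i,j) ∈ ℤ × ℤ, the discrete erosion speed satisfies 0 ≤ (E u)(i,j) ≤ ((√2·(1−δ) + δ)/h) · max(0, max_{(a,b)∈{−1,0,1}², (a,b)≠(0,0)} (u(i,j) − u(i+a, j+b))). -/

import Mathlib

/-- The weighted Rouy–Tourin discretisation of the erosion speed `|∇u|` (downwind version). -/
noncomputable def erosionSpeed (h δ : ℝ) (u : ℤ × ℤ → ℝ) (p : ℤ × ℤ) : ℝ :=
  ((1 - δ) / h) *
      Real.sqrt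
        ((max (u p - u (p.1 + 1, p.2)) (max (u p - u (p.1 - 1, p.2)) 0)) ^ 2
          + (max (u p - u (p.1, p.2 + 1)) (max (u p - u (p.1, p.2 - 1)) 0)) ^ 2)
    + (δ / (Real.sqrt 2 * h)) *
      Real.sqrt
        ((max (u p - u (p.1 + 1, p.2 + 1)) (max (u p - u (p.1 - 1, p.2 - 1)) 0)) ^ 2
          + (max (u p - u (p.1 - 1, p.2 + 1)) (max (u p - u (p.1 + 1, p.2 - 1)) 0)) ^ 2)

/-- The nonzero offsets of the punctured 3×3 neighbourhood. -/
noncomputable def puncturedOffsets : Finset (ℤ × ℤ) :=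
  ((Finset.Icc (-1 : ℤ) 1) ×ˢ (Finset.Icc (-1 : ℤ) 1)).erase (0, 0)

lemma puncturedOffsets_nonempty : puncturedOffsets.Nonempty := ⟨(1, 0), by decide⟩

lemma sqrt_two_max_bound {a b M : ℝ} (hM : 0 ≤ M) (ha0 : 0 ≤ a) (hb0 : 0 ≤ b)
    (ha : a ≤ M) (hb : b ≤ M) :
    Real.sqrt (a ^ 2 + b ^ 2) ≤ Real.sqrt 2 * M := by
  have h2 : a ^ 2 + b ^ 2 ≤ 2 * M ^ 2 := by nlinarith
  calc Real.sqrt (a ^ 2 + b ^ 2) ≤ Real.sqrt (2 * M ^ 2) := Real.sqrt_le_sqrt h2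
    _ = Real.sqrt 2 * M := by
        rw [Real.sqrt_mul (by norm_num), Real.sqrt_sq hM]

theorem erosion_speed_bounds
    (h δ : ℝ) (hh : 0 < h) (hδ : δ ∈ Set.Icc (0 : ℝ) 1)
    (u : ℤ × ℤ → ℝ) (p : ℤ × ℤ) :
    0 ≤ erosionSpeed h δ u p ∧
      erosionSpeed h δ u p
        ≤ ((Real.sqrt 2 * (1 - δ) + δ) / h) *
            max 0 (puncturedOffsets.sup' puncturedOffsets_nonempty
                    (fun q => u p - u (p.1 + q.1, p.2 + q.2))) := by
  obtain ⟨hδ0, hδ1⟩ := hδ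
  set M := max 0 (puncturedOffsets.sup' puncturedOffsets_nonempty
      (fun q => u p - u (p.1 + q.1, p.2 + q.2))) with hM
  have hM0 : 0 ≤ M := le_max_left _ _
  have hmem : ∀ q : ℤ × ℤ, q ∈ puncturedOffsets → u p - u (p.1 + q.1, p.2 + q.2) ≤ M := by
    intro q hq
    exact le_trans (Finset.le_sup' (fun q : ℤ × ℤ => u p - u (p.1 + q.1, p.2 + q.2)) hq) (le_max_right _ _)
  have key : ∀ a b : ℤ, (a, b) ∈ puncturedOffsets →
      u p - u (p.1 + a, p.2 + b) ≤ M := fun a b hab => hmem (a, b) hab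
  have c1 : (2 : ℝ) ≤ 2 := le_refl _
  -- bounds for the four max terms
  have h10 : u p - u (p.1 + 1, p.2) ≤ M := by
    have := key 1 0 (by decide); simpa using this
  have hm10 : u p - u (p.1 - 1, p.2) ≤ M := by
    have := key (-1) 0 (by decide); simpa [sub_eq_add_neg] using this
  have h01 : u p - u (p.1, p.2 + 1) ≤ M := by
    have := key 0 1 (by decide); simpa using this
  have h0m1 : u p - u (p.1, p.2 - 1) ≤ M := by
    have := key 0 (-1) (by decide); simpa [sub_eq_add_neg] using this
  have h11 : u p - u (p.1 + 1, p.2 + 1) ≤ M := by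
    have := key 1 1 (by decide); simpa using this
  have hm1m1 : u p - u (p.1 - 1, p.2 - 1) ≤ M := by
    have := key (-1) (-1) (by decide); simpa [sub_eq_add_neg] using this
  have hm11 : u p - u (p.1 - 1, p.2 + 1) ≤ M := by
    have := key (-1) 1 (by decide); simpa [sub_eq_add_neg] using this
  have h1m1 : u p - u (p.1 + 1, p.2 - 1) ≤ M := by
    have := key 1 (-1) (by decide); simpa [sub_eq_add_neg] using this
  set A := max (u p - u (p.1 + 1, p.2)) (max (u p - u (p.1 - 1, p.2)) 0) with hA
  set B := max (u p - u (p.1, p.2 + 1)) (max (u p - u (p.1, p.2 - 1)) 0) with hB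
  set C := max (u p - u (p.1 + 1, p.2 + 1)) (max (u p - u (p.1 - 1, p.2 - 1)) 0) with hC
  set D := max (u p - u (p.1 - 1, p.2 + 1)) (max (u p - u (p.1 + 1, p.2 - 1)) 0) with hD
  have hA0 : 0 ≤ A := le_max_of_le_right (le_max_right _ _)
  have hB0 : 0 ≤ B := le_max_of_le_right (le_max_right _ _)
  have hC0 : 0 ≤ C := le_max_of_le_right (le_max_right _ _)
  have hD0 : 0 ≤ D := le_max_of_le_right (le_max_right _ _)
  have hAM : A ≤ M := max_le h10 (max_le hm10 hM0)
  have hBM : B ≤ M := max_le h01 (max_le h0m1 hM0)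
  have hCM : C ≤ M := max_le h11 (max_le hm1m1 hM0)
  have hDM : D ≤ M := max_le hm11 (max_le h1m1 hM0)
  have hs2 : (0:ℝ) < Real.sqrt 2 := Real.sqrt_pos.mpr (by norm_num)
  have hcoef1 : 0 ≤ (1 - δ) / h := div_nonneg (by linarith) hh.le
  have hcoef2 : 0 ≤ δ / (Real.sqrt 2 * h) := div_nonneg hδ0 (by positivity)
  have hsA : Real.sqrt (A ^ 2 + B ^ 2) ≤ Real.sqrt 2 * M :=
    sqrt_two_max_bound hM0 hA0 hB0 hAM hBM
  have hsC : Real.sqrt (C ^ 2 + D ^ 2) ≤ Real.sqrt 2 * M :=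
    sqrt_two_max_bound hM0 hC0 hD0 hCM hDM
  constructor
  · unfold erosionSpeed
    have := Real.sqrt_nonneg (A ^ 2 + B ^ 2)
    have := Real.sqrt_nonneg (C ^ 2 + D ^ 2)
    rw [← hA, ← hB, ← hC, ← hD]
    positivity
  · unfold erosionSpeed
    rw [← hA, ← hB, ← hC, ← hD]
    have e1 : ((1 - δ) / h) * Real.sqrt (A ^ 2 + B ^ 2)
        ≤ ((1 - δ) / h) * (Real.sqrt 2 * M) := mul_le_mul_of_nonneg_left hsA hcoef1
    have e2 : (δ / (Real.sqrt 2 * h)) * Real.sqrt (C ^ 2 + D ^ 2)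
        ≤ (δ / (Real.sqrt 2 * h)) * (Real.sqrt 2 * M) := mul_le_mul_of_nonneg_left hsC hcoef2
    have e3 : (δ / (Real.sqrt 2 * h)) * (Real.sqrt 2 * M) = (δ / h) * M := by
      field_simp
    have e4 : ((1 - δ) / h) * (Real.sqrt 2 * M) + (δ / h) * M
        = ((Real.sqrt 2 * (1 - δ) + δ) / h) * M := by
      field_simp
    calc ((1 - δ) / h) * Real.sqrt (A ^ 2 + B ^ 2)
          + (δ / (Real.sqrt 2 * h)) * Real.sqrt (C ^ 2 + D ^ 2)
        ≤ ((1 - δ) / h) * (Real.sqrt 2 * M) + (δ / (Real.sqrt 2 * h)) * (Real.sqrt 2 * M) := by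
          exact add_le_add e1 e2
      _ = ((Real.sqrt 2 * (1 - δ) + δ) / h) * M := by rw [e3, e4]
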